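/- In the exterior algebra over ℂ generated by dz1,...,dz4,dz̄1,...,dz̄4, let x1,...,x4 be distinct reals, h3 = x1x3 + x2x4, h4 = x1x4 + x2x3, h2 = x1x2 + x3x4, and define the 2-form A1 as the Galois-covariant sum A1 = h3(x1-x3) dz1∧dz3 + h3(x2-x4) dz̄2∧dz̄4 + h3(x2-x4) dz2∧dz4 + h3(x1-x3) dz̄1∧dz̄3 + h4(x1-x4) dz1∧dz̄4 + h4(x2-x3) dz̄2∧dz3 + h4(x2-x3) dz2∧dz̄3 + h4(x1-x4) dz̄1∧dz4 + h2(x1-x2) dz1∧dz̄2 + h2(x3-x4) dz̄3∧dz4 + h2(x3-x4) dz3∧dz̄4 + h2(x1-x2) dz̄1∧dz2. Then A1 ∧ ω^3 = 0, where ω = (iD/Δ)(μ1 dz1∧dz̄1 - μ2 dz2∧dz̄2 + μ3 dz3∧dz̄3 - μ4 dz4∧dz̄4) with D, Δ, μ_j as above. -/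
import Mathlib


open Complex

/-- Anticommuting generators: `e 0,...,e 3` are `dz1,...,dz4` and
`e 4,...,e 7` are `dz̄1,...,dz̄4`. -/
noncomputable def e (i : Fin 8) : ExteriorAlgebra ℂ (Fin 8 → ℂ) :=
  ExteriorAlgebra.ι ℂ (Pi.single i 1)

lemma e_sq (i : Fin 8) : e i * e i = 0 := ExteriorAlgebra.ι_sq_zero _

lemma e_sq' (i : Fin 8) (x : ExteriorAlgebra ℂ (Fin 8 → ℂ)) :
    e i * (e i * x) = 0 := by rw [← mul_assoc, e_sq, zero_mul]

lemma e_swap (i j : Fin 8) (h : j < i) : e i * e j = -(e j * e i) := by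
  have h2 : e i * e j + e j * e i = 0 := by
    simp only [e]
    exact ExteriorAlgebra.ι_add_mul_swap (R := ℂ) (Pi.single i 1 : Fin 8 → ℂ) (Pi.single j 1 : Fin 8 → ℂ)
  rw [eq_neg_of_add_eq_zero_left h2]

lemma e_swap' (i j : Fin 8) (h : j < i) (x : ExteriorAlgebra ℂ (Fin 8 → ℂ)) :
    e i * (e j * x) = -(e j * (e i * x)) := by
  rw [← mul_assoc, e_swap i j h, neg_mul, mul_assoc]

set_option maxHeartbeats 4000000 in
theorem stmt_15 (x1 x2 x3 x4 : ℝ)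
    (hne : x1 ≠ x2 ∧ x1 ≠ x3 ∧ x1 ≠ x4 ∧ x2 ≠ x3 ∧ x2 ≠ x4 ∧ x3 ≠ x4)
    (D Δ μ1 μ2 μ3 μ4 h2 h3 h4 : ℝ)
    (hD : D = (x1-x2)*(x1-x3)*(x1-x4)*(x2-x3)*(x2-x4)*(x3-x4))
    (hΔ : Δ = D^2)
    (hμ1 : μ1 = (x1-x2)*(x1-x3)*(x1-x4))
    (hμ2 : μ2 = (x2-x1)*(x2-x3)*(x2-x4))
    (hμ3 : μ3 = (x3-x1)*(x3-x2)*(x3-x4))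
    (hμ4 : μ4 = (x4-x1)*(x4-x2)*(x4-x3))
    (hh2 : h2 = x1*x2 + x3*x4) (hh3 : h3 = x1*x3 + x2*x4) (hh4 : h4 = x1*x4 + x2*x3)
    (ω A1 : ExteriorAlgebra ℂ (Fin 8 → ℂ))
    (hω : ω = (I * D / Δ) • ((μ1 : ℂ) • (e 0 * e 4) - (μ2 : ℂ) • (e 1 * e 5)
        + (μ3 : ℂ) • (e 2 * e 6) - (μ4 : ℂ) • (e 3 * e 7)))
    (hA1 : A1 =
        ((h3*(x1-x3) : ℝ) : ℂ) • (e 0 * e 2) + ((h3*(x2-x4) : ℝ) : ℂ) • (e 5 * e 7)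
      + ((h3*(x2-x4) : ℝ) : ℂ) • (e 1 * e 3) + ((h3*(x1-x3) : ℝ) : ℂ) • (e 4 * e 6)
      + ((h4*(x1-x4) : ℝ) : ℂ) • (e 0 * e 7) + ((h4*(x2-x3) : ℝ) : ℂ) • (e 5 * e 2)
      + ((h4*(x2-x3) : ℝ) : ℂ) • (e 1 * e 6) + ((h4*(x1-x4) : ℝ) : ℂ) • (e 4 * e 3)
      + ((h2*(x1-x2) : ℝ) : ℂ) • (e 0 * e 5) + ((h2*(x3-x4) : ℝ) : ℂ) • (e 6 * e 3)
      + ((h2*(x3-x4) : ℝ) : ℂ) • (e 2 * e 7) + ((h2*(x1-x2) : ℝ) : ℂ) • (e 4 * e 1)) :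
    A1 * ω^3 = 0 := by
  subst hω hA1
  simp (config := { decide := true }) only [pow_succ, pow_zero, one_mul,
    smul_mul_assoc, mul_smul_comm, smul_add, smul_sub, smul_neg, smul_zero, smul_smul,
    mul_add, add_mul, sub_mul, mul_sub, neg_mul, mul_neg, neg_neg, neg_zero,
    mul_zero, zero_mul, add_zero, zero_add, sub_zero, zero_sub, sub_self,
    mul_assoc, e_swap', e_sq', e_sq, e_swap]
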